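/- Let E be a real inner product space, let f : E → ℝ be a convex function, let w ∈ E with w ≠ 0 and c ∈ ℝ, and let H = {x ∈ E : ⟪w, x⟫ = c} be the corresponding affine hyperplane. Suppose x₀ ∈ H minimizes f over H, i.e., f(x₀) ≤ f(y) for all y ∈ H. Then the strict sublevel set {y ∈ E : f(y) < f(x₀)} lies entirely in one open half-space determined by H: for all a, b ∈ E with f(a) < f(x₀) and f(b) < f(x₀), the numbers ⟪w, a⟫ − c and ⟪w, b⟫ − c are nonzero and have the same sign. -/

import Mathlib

/-- Half-space elimination lemma: if a convex function `f` on a real inner product space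
attains its minimum over the hyperplane `H = {x : ⟪w, x⟫ = c}` at `x₀`, then all points
with `f`-value strictly below `f x₀` lie strictly on one side of `H`. -/
theorem convex_min_on_hyperplane_sublevel_one_side
    {E : Type*} [NormedAddCommGroup E] [InnerProductSpace ℝ E]
    (f : E → ℝ)
    (hconv : ∀ x y : E, ∀ t : ℝ, 0 ≤ t → t ≤ 1 →
      f (t • x + (1 - t) • y) ≤ t * f x + (1 - t) * f y)
    (w : E) (hw : w ≠ 0) (c : ℝ)
    (x₀ : E) (hx₀ : (inner ℝ w x₀ : ℝ) = c)
    (hmin : ∀ y : E, (inner ℝ w y : ℝ) = c → f x₀ ≤ f y)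
    (a b : E) (ha : f a < f x₀) (hb : f b < f x₀) :
    (inner ℝ w a : ℝ) - c ≠ 0 ∧ (inner ℝ w b : ℝ) - c ≠ 0 ∧
      0 < ((inner ℝ w a : ℝ) - c) * ((inner ℝ w b : ℝ) - c) := by
  have hoff : ∀ p : E, f p < f x₀ → (inner ℝ w p : ℝ) - c ≠ 0 := by
    intro p hp h
    have : (inner ℝ w p : ℝ) = c := by linarith
    exact absurd (hmin p this) (not_le.mpr hp)
  have hA := hoff a ha
  have hB := hoff b hb
  refine ⟨hA, hB, ?_⟩
  by_contra hcontra
  push_neg at hcontra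
  set α : ℝ := (inner ℝ w a : ℝ) - c with hα
  set β : ℝ := (inner ℝ w b : ℝ) - c with hβ
  -- α and β have opposite signs (both nonzero, product ≤ 0)
  have hop : (α < 0 ∧ 0 < β) ∨ (β < 0 ∧ 0 < α) := by
    rcases lt_or_gt_of_ne hA with h1 | h1 <;> rcases lt_or_gt_of_ne hB with h2 | h2
    · nlinarith
    · exact Or.inl ⟨h1, h2⟩
    · exact Or.inr ⟨h2, h1⟩
    · nlinarith
  -- choose t = β / (β - α), then t·α + (1-t)·β = 0
  have hβα : β - α ≠ 0 := by rcases hop with ⟨h1, h2⟩ | ⟨h1, h2⟩ <;> nlinarith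
  set t : ℝ := β / (β - α) with ht
  have ht0 : 0 ≤ t := by
    rcases hop with ⟨h1, h2⟩ | ⟨h1, h2⟩
    · exact le_of_lt (div_pos h2 (by linarith))
    · exact le_of_lt (div_pos_of_neg_of_neg h1 (by linarith))
  have ht1 : t ≤ 1 := by
    rcases hop with ⟨h1, h2⟩ | ⟨h1, h2⟩
    · rw [ht, div_le_one (by linarith)]; linarith
    · rw [ht, div_le_one_of_neg (by linarith)]; linarith
  have hcomb : t * α + (1 - t) * β = 0 := by
    rw [ht]
    field_simp
    ring
  have hinner : (inner ℝ w (t • a + (1 - t) • b) : ℝ) = c := by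
    rw [inner_add_right, real_inner_smul_right, real_inner_smul_right]
    have : (inner ℝ w a : ℝ) = α + c := by rw [hα]; ring
    have hb' : (inner ℝ w b : ℝ) = β + c := by rw [hβ]; ring
    rw [this, hb']
    nlinarith [hcomb]
  have := hmin _ hinner
  have hc := hconv a b t ht0 ht1
  nlinarith [mul_nonneg ht0 (le_of_lt (sub_pos.mpr ha)), mul_nonneg (by linarith : (0:ℝ) ≤ 1 - t) (le_of_lt (sub_pos.mpr hb))]
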